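/- Let (G,t) be a threshold instance, let X ⊆ V(G) be a vertex cover of G, and let S ⊆ X be harmless for (G,t). For each A ⊆ X let R_A = { u ∈ V(G) \ X : N(u) = A }. Then for every natural number s, the following are equivalent: (1) there exists I ⊆ V(G) \ X with |I| = s such that S ∪ I is harmless for (G,t); (2) there exists a function x assigning to each A ⊆ X a natural number x_A with x_A ≤ |R_A| for all A, Σ_{A ⊆ X} x_A = s, and |N(u) ∩ S| + Σ_{A ⊆ X, u ∈ A} x_A < t(u) for every u ∈ X. -/

import Mathlib

/-- A set `S` is harmless for the threshold instance `(G, t)` if every vertex `v`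
has strictly fewer than `t v` neighbours in `S`. -/
def Harmless {V : Type*} [Fintype V] [DecidableEq V] (G : SimpleGraph V)
    [DecidableRel G.Adj] (t : V → ℕ) (S : Finset V) : Prop :=
  ∀ v : V, (G.neighborFinset v ∩ S).card < t v

/-- ILP correspondence: with `X` a vertex cover, `S ⊆ X` harmless, and
`R_A = {u ∉ X : N(u) = A}` for `A ⊆ X`, there is an `I ⊆ V ∖ X` of size `s`
with `S ∪ I` harmless iff there are numbers `x_A ≤ |R_A|` summing to `s` such
that `|N(u) ∩ S| + Σ_{A ∋ u} x_A < t u` for all `u ∈ X`. -/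
theorem vertexCover_ILP_correspondence {V : Type*} [Fintype V] [DecidableEq V]
    (G : SimpleGraph V) [DecidableRel G.Adj] (t : V → ℕ) (ht : ∀ v, 1 ≤ t v)
    (X : Finset V) (hX : ∀ u v : V, G.Adj u v → u ∈ X ∨ v ∈ X)
    (S : Finset V) (hSX : S ⊆ X) (hS : Harmless G t S) (s : ℕ) :
    (∃ I : Finset V, (∀ u ∈ I, u ∉ X) ∧ I.card = s ∧ Harmless G t (S ∪ I)) ↔
      (∃ x : Finset V → ℕ,
        (∀ A ∈ X.powerset,
          x A ≤ (Finset.univ.filter (fun u => u ∉ X ∧ G.neighborFinset u = A)).card) ∧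
        (∑ A ∈ X.powerset, x A = s) ∧
        (∀ u ∈ X,
          (G.neighborFinset u ∩ S).card +
            ∑ A ∈ X.powerset.filter (fun A => u ∈ A), x A < t u)) := by
  classical
  have hNsub : ∀ u : V, u ∉ X → G.neighborFinset u ⊆ X := by
    intro u hu v hv
    rw [SimpleGraph.mem_neighborFinset] at hv
    rcases hX u v hv with h | h
    · exact absurd h hu
    · exact h
  -- fiber counting lemma
  have fiber : ∀ (J : Finset V), (∀ u ∈ J, u ∉ X) → ∀ v : V,
      (G.neighborFinset v ∩ J).card
        = ∑ A ∈ X.powerset.filter (fun A => v ∈ A),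
            (J.filter (fun w => G.neighborFinset w = A)).card := by
    intro J hJ v
    rw [Finset.card_eq_sum_card_fiberwise
      (f := fun w => G.neighborFinset w)
      (t := X.powerset.filter (fun A => v ∈ A)) ?_]
    · apply Finset.sum_congr rfl
      intro A hA
      simp only [Finset.mem_filter, Finset.mem_powerset] at hA
      congr 1
      ext w
      simp only [Finset.mem_filter, Finset.mem_inter, SimpleGraph.mem_neighborFinset]
      constructor
      · rintro ⟨⟨-, hwJ⟩, hw⟩; exact ⟨hwJ, hw⟩
      · rintro ⟨hwJ, hw⟩
        refine ⟨⟨?_, hwJ⟩, hw⟩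
        have : v ∈ G.neighborFinset w := by rw [hw]; exact hA.2
        rw [SimpleGraph.mem_neighborFinset] at this
        exact this.symm
    · intro w hw
      simp only [Finset.mem_coe, Finset.mem_inter, SimpleGraph.mem_neighborFinset] at hw
      simp only [Finset.mem_coe, Finset.mem_filter, Finset.mem_powerset]
      refine ⟨hNsub w (hJ w hw.2), ?_⟩
      rw [SimpleGraph.mem_neighborFinset]
      exact hw.1.symm
  -- split lemma
  have split : ∀ (J : Finset V), (∀ u ∈ J, u ∉ X) → ∀ v : V,
      (G.neighborFinset v ∩ (S ∪ J)).card
        = (G.neighborFinset v ∩ S).card + (G.neighborFinset v ∩ J).card := by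
    intro J hJ v
    rw [Finset.inter_union_distrib_left]
    apply Finset.card_union_of_disjoint
    rw [Finset.disjoint_left]
    intro w hwS hwJ
    simp only [Finset.mem_inter] at hwS hwJ
    exact hJ w hwJ.2 (hSX hwS.2)
  constructor
  · rintro ⟨I, hIX, hIcard, hI⟩
    refine ⟨fun A => (I.filter (fun w => G.neighborFinset w = A)).card, ?_, ?_, ?_⟩
    · intro A hA
      apply Finset.card_le_card
      intro w hw
      simp only [Finset.mem_filter] at hw ⊢
      exact ⟨Finset.mem_univ w, hIX w hw.1, hw.2⟩
    · rw [← hIcard]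
      refine (Finset.card_eq_sum_card_fiberwise ?_).symm
      intro w hw
      rw [Finset.mem_coe, Finset.mem_powerset]
      exact hNsub w (hIX w hw)
    · intro u hu
      have h := hI u
      rwa [split I hIX u, fiber I hIX u] at h
  · rintro ⟨x, hx1, hx2, hx3⟩
    set R : Finset V → Finset V :=
      fun A => Finset.univ.filter (fun u => u ∉ X ∧ G.neighborFinset u = A) with hR
    have hex : ∀ A : Finset V, ∃ J, J ⊆ R A ∧ J.card = if A ∈ X.powerset then x A else 0 := by
      intro A
      by_cases hA : A ∈ X.powerset
      · rw [if_pos hA]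
        exact Finset.exists_subset_card_eq (s := R A) (n := x A) (hx1 A hA)
      · exact ⟨∅, Finset.empty_subset _, by rw [if_neg hA]; simp⟩
    choose f hfs hfc using hex
    have hmemR : ∀ A, ∀ w ∈ f A, w ∉ X ∧ G.neighborFinset w = A := by
      intro A w hw
      have := hfs A hw
      rw [hR, Finset.mem_filter] at this
      exact this.2
    set I : Finset V := X.powerset.biUnion f with hI
    have hIX : ∀ u ∈ I, u ∉ X := by
      intro u hu
      rw [hI, Finset.mem_biUnion] at hu
      obtain ⟨A, -, hu⟩ := hu
      exact (hmemR A u hu).1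
    have hfilter : ∀ A ∈ X.powerset, I.filter (fun w => G.neighborFinset w = A) = f A := by
      intro A hA
      ext w
      simp only [Finset.mem_filter, hI, Finset.mem_biUnion]
      constructor
      · rintro ⟨⟨B, hB, hwB⟩, hNw⟩
        have := (hmemR B w hwB).2
        rw [hNw] at this
        rw [this]; exact hwB
      · intro hw
        exact ⟨⟨A, hA, hw⟩, (hmemR A w hw).2⟩
    have hdisj : (X.powerset : Set (Finset V)).PairwiseDisjoint f := by
      intro A hA B hB hAB
      simp only [Function.onFun]
      rw [Finset.disjoint_left]
      intro w hwA hwB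
      exact hAB ((hmemR A w hwA).2.symm.trans (hmemR B w hwB).2)
    refine ⟨I, hIX, ?_, ?_⟩
    · rw [hI, Finset.card_biUnion (fun A hA B hB hAB => hdisj hA hB hAB)]
      rw [← hx2]
      apply Finset.sum_congr rfl
      intro A hA
      rw [hfc A, if_pos hA]
    · intro v
      by_cases hv : v ∈ X
      · rw [split I hIX v, fiber I hIX v]
        calc (G.neighborFinset v ∩ S).card
            + ∑ A ∈ X.powerset.filter (fun A => v ∈ A),
                (I.filter (fun w => G.neighborFinset w = A)).card
            = (G.neighborFinset v ∩ S).card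
            + ∑ A ∈ X.powerset.filter (fun A => v ∈ A), x A := by
              congr 1
              apply Finset.sum_congr rfl
              intro A hA
              rw [Finset.mem_filter] at hA
              rw [hfilter A hA.1, hfc A, if_pos hA.1]
          _ < t v := hx3 v hv
      · have heq : G.neighborFinset v ∩ (S ∪ I) = G.neighborFinset v ∩ S := by
          ext w
          simp only [Finset.mem_inter, Finset.mem_union]
          constructor
          · rintro ⟨hwN, hw | hw⟩
            · exact ⟨hwN, hw⟩
            · exact absurd (hNsub v hv hwN) (hIX w hw)
          · rintro ⟨hwN, hw⟩
            exact ⟨hwN, Or.inl hw⟩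
        rw [heq]
        exact hS v
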